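/- For any three unit vectors d1, d2, d3 in ℂ², the quantity S = |⟨d1,d2⟩|² + |⟨d2,d3⟩|² − |⟨d1,d3⟩|² satisfies S ≤ 5/4. -/

import Mathlib

open scoped InnerProductSpace

private lemma overlap_alg (a b c s t : ℝ) (ha : 0 ≤ a) (hb : 0 ≤ b) (hc : 0 ≤ c)
    (hs2 : s^2 = 1 - a^2) (ht2 : t^2 = 1 - b^2)
    (key : a*b - c ≤ s*t) :
    a^2 + b^2 - c^2 ≤ 5/4 := by
  have habst : a*b + s*t ≤ 1 := by nlinarith [sq_nonneg (a*t - b*s), sq_nonneg (a*b + s*t)]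
  rcases le_or_gt (a*b) c with h | h
  · nlinarith [sq_nonneg (1 - a^2), mul_nonneg ha hb]
  · nlinarith [sq_nonneg (4*(a*b - c) - 1), mul_nonneg (sub_nonneg.2 h.le) (sub_nonneg.2 key), sq_nonneg (a*b - c)]

private lemma proj_norm_sq (x y : EuclideanSpace ℂ (Fin 2)) (hx : ‖x‖ = 1) (hy : ‖y‖ = 1) :
    ‖x - ⟪y, x⟫_ℂ • y‖^2 = 1 - ‖⟪y, x⟫_ℂ‖^2 := by
  have h := @norm_sub_sq ℂ _ _ _ _ x (⟪y, x⟫_ℂ • y)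
  have hz : RCLike.re ⟪x, ⟪y, x⟫_ℂ • y⟫_ℂ = ‖⟪y, x⟫_ℂ‖^2 := by
    rw [inner_smul_right, ← inner_conj_symm y x, RCLike.conj_mul]
    rw [RCLike.norm_conj]
    norm_cast
  rw [hz, norm_smul, hx, hy] at h
  rw [h]
  ring
theorem three_qubit_overlap_bound
    (d1 d2 d3 : EuclideanSpace ℂ (Fin 2))
    (h1 : ‖d1‖ = 1) (h2 : ‖d2‖ = 1) (h3 : ‖d3‖ = 1) :
    ‖⟪d1, d2⟫_ℂ‖ ^ 2 + ‖⟪d2, d3⟫_ℂ‖ ^ 2 - ‖⟪d1, d3⟫_ℂ‖ ^ 2 ≤ 5 / 4 := by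
  set u : EuclideanSpace ℂ (Fin 2) := d1 - ⟪d2, d1⟫_ℂ • d2 with hu
  set v : EuclideanSpace ℂ (Fin 2) := d3 - ⟪d2, d3⟫_ℂ • d2 with hv
  have hd22 : ⟪d2, d2⟫_ℂ = 1 := by
    rw [inner_self_eq_norm_sq_to_K, h2]; norm_num
  have h21 : ⟪d2, d1⟫_ℂ = starRingEnd ℂ ⟪d1, d2⟫_ℂ := (inner_conj_symm d2 d1).symm
  have huv : ⟪u, v⟫_ℂ = ⟪d1, d3⟫_ℂ - ⟪d1, d2⟫_ℂ * ⟪d2, d3⟫_ℂ := by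
    simp [hu, hv, inner_sub_left, inner_sub_right, inner_smul_left, inner_smul_right, hd22, h21, h2, -inner_conj_symm, mul_comm]
  have hnu : ‖u‖^2 = 1 - ‖⟪d1, d2⟫_ℂ‖^2 := by
    rw [hu, proj_norm_sq d1 d2 h1 h2, ← norm_inner_symm]
  have hnv : ‖v‖^2 = 1 - ‖⟪d2, d3⟫_ℂ‖^2 := proj_norm_sq d3 d2 h3 h2
  have key : ‖⟪d1, d2⟫_ℂ‖ * ‖⟪d2, d3⟫_ℂ‖ - ‖⟪d1, d3⟫_ℂ‖ ≤ ‖u‖ * ‖v‖ := by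
    calc ‖⟪d1, d2⟫_ℂ‖ * ‖⟪d2, d3⟫_ℂ‖ - ‖⟪d1, d3⟫_ℂ‖
        = ‖⟪d1, d2⟫_ℂ * ⟪d2, d3⟫_ℂ‖ - ‖⟪d1, d3⟫_ℂ‖ := by rw [norm_mul]
      _ ≤ ‖⟪d1, d2⟫_ℂ * ⟪d2, d3⟫_ℂ - ⟪d1, d3⟫_ℂ‖ := norm_sub_norm_le _ _
      _ = ‖⟪u, v⟫_ℂ‖ := by rw [huv, norm_sub_rev]
      _ ≤ ‖u‖ * ‖v‖ := norm_inner_le_norm u v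
  exact overlap_alg _ _ _ ‖u‖ ‖v‖ (norm_nonneg _) (norm_nonneg _) (norm_nonneg _)
    (by rw [hnu]) (by rw [hnv]) key
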